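/- For nonnegative integers a < b and m ≥ 0, the double integral I_m(a,b) = ((-1)^m/m!) ∫_{(0,1)^2} (log^m(xy)) x^a y^b / (1-xy) dx dy equals (H_{m+1}(b) - H_{m+1}(a))/(b-a), where H_s(x) = Σ_{k=1}^x 1/k^s. -/

import Mathlib

open MeasureTheory Real Set Finset


lemma img_exp_neg : (fun t : ℝ => Real.exp (-t)) '' Ioi 0 = Ioo (0:ℝ) 1 := by
  ext x
  constructor
  · rintro ⟨t, ht, rfl⟩
    exact ⟨Real.exp_pos _, Real.exp_lt_one_iff.mpr (by simpa using ht)⟩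
  · rintro ⟨h0, h1⟩
    exact ⟨-Real.log x, by simpa using Real.log_neg h0 h1, by simp [Real.exp_log h0]⟩

lemma deriv_exp_neg (t : ℝ) : HasDerivWithinAt (fun t : ℝ => Real.exp (-t)) (-Real.exp (-t)) (Set.Ioi 0) t := by
  simpa using ((hasDerivAt_neg t).exp).hasDerivWithinAt

lemma inj_exp_neg : Set.InjOn (fun t : ℝ => Real.exp (-t)) (Set.Ioi 0) := fun x _ y _ h => by
  simpa using Real.exp_injective h

lemma key_eq (p j : ℕ) : ∀ t ∈ Ioi (0:ℝ),
    |(-Real.exp (-t))| • ((Real.exp (-t)) ^ p * (-Real.log (Real.exp (-t))) ^ j)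
      = t ^ ((j:ℝ) + 1 - 1) * Real.exp (-(((p:ℝ)+1) * t)) := by
  intro t ht
  rw [abs_neg, abs_of_pos (Real.exp_pos _), Real.log_exp, neg_neg, smul_eq_mul,
    ← Real.exp_nat_mul, add_sub_cancel_right, Real.rpow_natCast]
  rw [show rexp (-t) * (rexp (↑p * -t) * t ^ j) = t^j * (rexp (-t) * rexp (↑p * -t)) by ring,
    ← Real.exp_add]
  ring_nf

lemma oneD_val (p j : ℕ) :
    ∫ x in Ioo (0:ℝ) 1, x ^ p * (-Real.log x) ^ j
      = (j.factorial : ℝ) / ((p:ℝ) + 1) ^ (j + 1) := by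
  rw [← img_exp_neg,
    integral_image_eq_integral_abs_deriv_smul measurableSet_Ioi
      (fun t _ => deriv_exp_neg t) inj_exp_neg,
    setIntegral_congr_fun measurableSet_Ioi (key_eq p j),
    Real.integral_rpow_mul_exp_neg_mul_Ioi (by positivity) (by positivity),
    Real.Gamma_nat_eq_factorial]
  have : ((j:ℝ) + 1) = ((j+1 : ℕ) : ℝ) := by push_cast; ring
  rw [this, Real.rpow_natCast]
  rw [div_pow, one_pow]
  ring

lemma oneD_int (p j : ℕ) :
    IntegrableOn (fun x : ℝ => x ^ p * (-Real.log x) ^ j) (Ioo (0:ℝ) 1) := by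
  rw [← img_exp_neg,
    integrableOn_image_iff_integrableOn_abs_deriv_smul measurableSet_Ioi
      (fun t _ => deriv_exp_neg t) inj_exp_neg]
  have := integrableOn_rpow_mul_exp_neg_mul_rpow (p := 1) (s := (j:ℝ)) (b := (p:ℝ)+1)
    (lt_of_lt_of_le neg_one_lt_zero (Nat.cast_nonneg j)) one_pos (by positivity)
  apply (this.congr_fun ?_ measurableSet_Ioi)
  intro t ht
  have h := key_eq p j t ht
  rw [add_sub_cancel_right] at h
  simp only [Real.rpow_one, neg_mul]
  rw [← h]

lemma sq_meas : MeasurableSet ((Ioo (0:ℝ) 1) ×ˢ (Ioo (0:ℝ) 1)) :=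
  measurableSet_Ioo.prod measurableSet_Ioo

lemma expand_pow (m p q : ℕ) : ∀ z ∈ (Ioo (0:ℝ) 1) ×ˢ (Ioo (0:ℝ) 1),
    (-Real.log (z.1 * z.2)) ^ m * z.1 ^ p * z.2 ^ q
      = ∑ j ∈ range (m+1), (m.choose j : ℝ) *
          ((z.1 ^ p * (-Real.log z.1) ^ j) * (z.2 ^ q * (-Real.log z.2) ^ (m-j))) := by
  rintro ⟨x, y⟩ ⟨hx, hy⟩
  simp only
  rw [Real.log_mul (ne_of_gt hx.1) (ne_of_gt hy.1), neg_add, add_pow]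
  rw [Finset.sum_mul, Finset.sum_mul]
  refine Finset.sum_congr rfl fun j hj => by ring

lemma twoD_int (m p q : ℕ) :
    IntegrableOn (fun z : ℝ × ℝ =>
      (-Real.log (z.1 * z.2)) ^ m * z.1 ^ p * z.2 ^ q)
      ((Ioo (0:ℝ) 1) ×ˢ (Ioo (0:ℝ) 1)) := by
  rw [IntegrableOn, Measure.volume_eq_prod, ← Measure.prod_restrict]
  have hint : Integrable (fun z : ℝ × ℝ => ∑ j ∈ range (m+1), (m.choose j : ℝ) *
      ((z.1 ^ p * (-Real.log z.1) ^ j) * (z.2 ^ q * (-Real.log z.2) ^ (m-j))))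
      ((volume.restrict (Ioo (0:ℝ) 1)).prod (volume.restrict (Ioo (0:ℝ) 1))) :=
    integrable_finset_sum _ (fun j _ =>
      (((oneD_int p j).mul_prod (oneD_int q (m-j))).const_mul _))
  apply hint.congr
  rw [Measure.prod_restrict, ← Measure.volume_eq_prod]
  exact (ae_restrict_iff' sq_meas).mpr (Filter.Eventually.of_forall
    (fun z hz => (expand_pow m p q z hz).symm))

lemma twoD_val (m p q : ℕ) (hpq : p < q) :
    ∫ z in (Ioo (0:ℝ) 1) ×ˢ (Ioo (0:ℝ) 1),
      (-Real.log (z.1 * z.2)) ^ m * z.1 ^ p * z.2 ^ q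
    = (m.factorial : ℝ) * (1/((p:ℝ)+1)^(m+1) - 1/((q:ℝ)+1)^(m+1)) / ((q:ℝ) - p) := by
  have hP : (0:ℝ) < (p:ℝ)+1 := by positivity
  have hQ : (0:ℝ) < (q:ℝ)+1 := by positivity
  have hQP : ((q:ℝ) - p) ≠ 0 := by
    have : (p:ℝ) < q := by exact_mod_cast hpq
    linarith
  rw [setIntegral_congr_fun sq_meas (expand_pow m p q)]
  rw [Measure.volume_eq_prod, ← Measure.prod_restrict]
  rw [integral_finset_sum _ (fun j _ =>
    (((oneD_int p j).mul_prod (oneD_int q (m-j))).const_mul _))]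
  have step : ∀ j ∈ range (m+1),
      (∫ z : ℝ × ℝ, (m.choose j : ℝ) *
        ((z.1 ^ p * (-Real.log z.1) ^ j) * (z.2 ^ q * (-Real.log z.2) ^ (m-j)))
        ∂((volume.restrict (Ioo (0:ℝ) 1)).prod (volume.restrict (Ioo (0:ℝ) 1))))
      = (m.factorial : ℝ) * ((((p:ℝ)+1)⁻¹ * ((q:ℝ)+1)⁻¹) *
          (((p:ℝ)+1)⁻¹ ^ j * ((q:ℝ)+1)⁻¹ ^ (m-j))) := by
    intro j hj
    rw [MeasureTheory.integral_const_mul,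
      integral_prod_mul (f := fun x : ℝ => x ^ p * (-Real.log x) ^ j)
        (g := fun y : ℝ => y ^ q * (-Real.log y) ^ (m-j)), oneD_val, oneD_val]
    have hcf : (m.choose j : ℝ) * (j.factorial : ℝ) * ((m-j).factorial : ℝ)
        = (m.factorial : ℝ) := by
      rw [← Nat.cast_mul, ← Nat.cast_mul,
        Nat.choose_mul_factorial_mul_factorial (Nat.lt_succ_iff.mp (mem_range.mp hj))]
    rw [div_mul_div_comm, pow_succ, pow_succ, ← hcf]
    simp only [inv_pow]
    field_simp
  rw [Finset.sum_congr rfl step, ← Finset.mul_sum, ← Finset.mul_sum]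
  set u := ((p:ℝ)+1)⁻¹ with hu
  set v := ((q:ℝ)+1)⁻¹ with hv
  set S := ∑ j ∈ range (m+1), u ^ j * v ^ (m - j) with hS
  have huv : u * v * ((q:ℝ) - p) = u - v := by
    rw [hu, hv]; field_simp; ring
  have hg : S * (u - v) = u ^ (m+1) - v ^ (m+1) := by
    have h := geom_sum₂_mul u v (m+1)
    simpa [hS] using h
  rw [eq_div_iff hQP,
    show (m.factorial : ℝ) * (u * v * S) * ((q:ℝ) - p)
      = (m.factorial : ℝ) * (S * (u * v * ((q:ℝ)-p))) by ring, huv, hg,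
    hu, hv, inv_pow, inv_pow, one_div, one_div]

noncomputable def w (m k : ℕ) : ℝ := 1 / ((k:ℝ) + 1) ^ (m + 1)

lemma w_nonneg (m k : ℕ) : 0 ≤ w m k := by unfold w; positivity

lemma w_anti (m : ℕ) : ∀ k, w m (k+1) ≤ w m k := by
  intro k
  unfold w
  apply one_div_le_one_div_of_le (by positivity)
  apply pow_le_pow_left₀ (by positivity)
  push_cast; linarith

lemma w_tendsto (m : ℕ) : Filter.Tendsto (fun k => w m k) Filter.atTop (nhds 0) := by
  unfold w
  simp only [one_div]
  apply Filter.Tendsto.inv_tendsto_atTop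
  apply Filter.Tendsto.comp (Filter.tendsto_pow_atTop (Nat.succ_ne_zero m))
  exact Filter.tendsto_atTop_add_const_right _ _ tendsto_natCast_atTop_atTop

lemma tele (m j : ℕ) : HasSum (fun n => w m (n+j) - w m (n+j+1)) (w m j) := by
  have hnn : ∀ n, 0 ≤ w m (n+j) - w m (n+j+1) := fun n => sub_nonneg.mpr (w_anti m _)
  rw [hasSum_iff_tendsto_nat_of_nonneg hnn]
  have hps : ∀ N, ∑ i ∈ range N, (w m (i+j) - w m (i+j+1)) = w m j - w m (N+j) := by
    intro N
    have := Finset.sum_range_sub' (fun i => w m (i+j)) N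
    simpa [add_right_comm] using this
  simp only [hps]
  have : Filter.Tendsto (fun N => w m (N+j)) Filter.atTop (nhds 0) :=
    (w_tendsto m).comp (Filter.tendsto_add_atTop_nat j)
  simpa using (tendsto_const_nhds (x := w m j)).sub this

lemma tele_sum (m a b : ℕ) (hab : a ≤ b) :
    HasSum (fun n => w m (a+n) - w m (b+n)) (∑ j ∈ Ico a b, w m j) := by
  have h := hasSum_sum (f := fun (j : ℕ) (n : ℕ) => w m (n+j) - w m (n+j+1))
    (s := Ico a b) (a := fun j => w m j) (fun j _ => tele m j)
  have hpt : ∀ n : ℕ, ∑ j ∈ Ico a b, (w m (n+j) - w m (n+j+1)) = w m (a+n) - w m (b+n) := by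
    intro n
    rw [Finset.sum_Ico_eq_sum_range]
    rw [Finset.sum_congr rfl (fun i (_ : i ∈ range (b-a)) => by
      rw [show n+(a+i)+1 = n+(a+(i+1)) by omega]),
      Finset.sum_range_sub' (fun i => w m (n+(a+i))) (b-a),
      show n+(a+0) = a+n by omega, show n+(a+(b-a)) = b+n by omega]
  simpa [hpt] using h


theorem stmt_7 (a b m : ℕ) (hab : a < b) :
    ((-1 : ℝ) ^ m / (m.factorial : ℝ)) *
        ∫ p in (Set.Ioo (0 : ℝ) 1) ×ˢ (Set.Ioo (0 : ℝ) 1),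
          (Real.log (p.1 * p.2)) ^ m * p.1 ^ a * p.2 ^ b / (1 - p.1 * p.2) =
      ((∑ k ∈ Finset.Icc 1 b, 1 / (k : ℝ) ^ (m + 1)) -
        ∑ k ∈ Finset.Icc 1 a, 1 / (k : ℝ) ^ (m + 1)) / ((b : ℝ) - a) := by
  set s := (Set.Ioo (0 : ℝ) 1) ×ˢ (Set.Ioo (0 : ℝ) 1) with hs
  set F : ℕ → ℝ × ℝ → ℝ :=
    fun n z => (-Real.log (z.1 * z.2)) ^ m * z.1 ^ (a+n) * z.2 ^ (b+n) with hF
  have hfacne : ((m.factorial : ℝ)) ≠ 0 := Nat.cast_ne_zero.mpr m.factorial_ne_zero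
  have hbane : ((b:ℝ) - a) ≠ 0 := by
    have : (a:ℝ) < b := by exact_mod_cast hab
    linarith
  have hFint : ∀ n, Integrable (F n) (volume.restrict s) := fun n => twoD_int m (a+n) (b+n)
  have hFval : ∀ n, ∫ z in s, F n z
      = (m.factorial : ℝ) * (w m (a+n) - w m (b+n)) / ((b:ℝ) - a) := by
    intro n
    rw [hF, hs]
    rw [twoD_val m (a+n) (b+n) (by omega)]
    unfold w
    push_cast
    have h1 : ((b:ℝ) + n) - ((a:ℝ) + n) = (b:ℝ) - a := by ring
    rw [h1]
  have hnonneg : ∀ n, ∀ z ∈ s, 0 ≤ F n z := by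
    rintro n ⟨x, y⟩ ⟨hx, hy⟩
    have h1 : Real.log (x * y) ≤ 0 :=
      Real.log_nonpos (mul_nonneg hx.1.le hy.1.le) (by nlinarith [hx.1, hx.2, hy.1, hy.2])
    exact mul_nonneg (mul_nonneg (pow_nonneg (neg_nonneg.mpr h1) m)
      (pow_nonneg hx.1.le _)) (pow_nonneg hy.1.le _)
  have hnorm : ∀ n, ∫ z in s, ‖F n z‖ = ∫ z in s, F n z := by
    intro n
    exact setIntegral_congr_fun sq_meas fun z hz => Real.norm_of_nonneg (hnonneg n z hz)
  have hHasSum : HasSum (fun n => ∫ z in s, F n z)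
      ((m.factorial : ℝ) * (∑ j ∈ Ico a b, w m j) / ((b:ℝ) - a)) := by
    have h := ((tele_sum m a b hab.le).mul_left (m.factorial : ℝ)).div_const ((b:ℝ) - a)
    have he : (fun n => ∫ z in s, F n z)
        = fun n => (m.factorial : ℝ) * (w m (a+n) - w m (b+n)) / ((b:ℝ) - a) :=
      funext hFval
    rw [he]
    exact h
  have hsummable : Summable fun n => ∫ z in s, ‖F n z‖ :=
    hHasSum.summable.congr fun n => (hnorm n).symm
  have key := integral_tsum_of_summable_integral_norm hFint hsummable
  have hpt : ∀ z ∈ s, ∑' n, F n z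
      = (-Real.log (z.1 * z.2)) ^ m * z.1 ^ a * z.2 ^ b / (1 - z.1 * z.2) := by
    rintro ⟨x, y⟩ ⟨hx, hy⟩
    have hxy0 : 0 ≤ x * y := mul_nonneg hx.1.le hy.1.le
    have hxy1 : x * y < 1 := by nlinarith [hx.1, hx.2, hy.1, hy.2]
    have hterm : ∀ n : ℕ, F n (x, y)
        = ((-Real.log (x * y)) ^ m * x ^ a * y ^ b) * (x * y) ^ n := by
      intro n
      simp only [hF]
      rw [pow_add, pow_add, mul_pow]
      ring
    rw [tsum_congr hterm, tsum_mul_left, tsum_geometric_of_lt_one hxy0 hxy1]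
    simp only
    rw [div_eq_mul_inv]
  have hG : ∫ z in s, (∑' n, F n z)
      = ∫ z in s, (-Real.log (z.1 * z.2)) ^ m * z.1 ^ a * z.2 ^ b / (1 - z.1 * z.2) :=
    setIntegral_congr_fun sq_meas hpt
  have hsign : ∀ z : ℝ × ℝ, (-1:ℝ) ^ m *
      ((Real.log (z.1 * z.2)) ^ m * z.1 ^ a * z.2 ^ b / (1 - z.1 * z.2))
      = (-Real.log (z.1 * z.2)) ^ m * z.1 ^ a * z.2 ^ b / (1 - z.1 * z.2) := by
    intro z
    rw [neg_pow]
    ring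
  have hIco : ∑ j ∈ Ico a b, w m j
      = (∑ k ∈ Finset.Icc 1 b, 1 / (k : ℝ) ^ (m + 1)) -
        ∑ k ∈ Finset.Icc 1 a, 1 / (k : ℝ) ^ (m + 1) := by
    have h1 : ∀ n : ℕ, ∑ k ∈ Finset.Icc 1 n, 1 / (k : ℝ) ^ (m + 1)
        = ∑ k ∈ Finset.Ioc 0 n, 1 / (k : ℝ) ^ (m + 1) := by
      intro n
      rw [show (1:ℕ) = 0 + 1 from rfl, Finset.Icc_add_one_left_eq_Ioc]
    rw [h1, h1]
    have h2 := Finset.sum_Ioc_consecutive (f := fun k : ℕ => 1 / (k : ℝ) ^ (m + 1))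
      (Nat.zero_le a) hab.le
    rw [← h2, add_sub_cancel_left]
    rw [← Finset.Ico_add_one_add_one_eq_Ioc, Finset.sum_Ico_eq_sum_range, Finset.sum_Ico_eq_sum_range]
    rw [show b + 1 - (a + 1) = b - a by omega]
    refine Finset.sum_congr rfl fun i _ => ?_
    unfold w
    push_cast
    ring_nf
  calc ((-1 : ℝ) ^ m / (m.factorial : ℝ)) *
        ∫ z in s, (Real.log (z.1 * z.2)) ^ m * z.1 ^ a * z.2 ^ b / (1 - z.1 * z.2)
      = (1 / (m.factorial : ℝ)) * ((-1:ℝ) ^ m *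
        ∫ z in s, (Real.log (z.1 * z.2)) ^ m * z.1 ^ a * z.2 ^ b / (1 - z.1 * z.2)) := by
        ring
    _ = (1 / (m.factorial : ℝ)) * ∫ z in s, (-1:ℝ) ^ m *
        ((Real.log (z.1 * z.2)) ^ m * z.1 ^ a * z.2 ^ b / (1 - z.1 * z.2)) := by
        rw [MeasureTheory.integral_const_mul]
    _ = (1 / (m.factorial : ℝ)) *
        ∫ z in s, (-Real.log (z.1 * z.2)) ^ m * z.1 ^ a * z.2 ^ b / (1 - z.1 * z.2) := by
        rw [setIntegral_congr_fun sq_meas (fun z _ => hsign z)]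
    _ = (1 / (m.factorial : ℝ)) * ∫ z in s, (∑' n, F n z) := by rw [hG]
    _ = (1 / (m.factorial : ℝ)) * ∑' n, ∫ z in s, F n z := by rw [key]
    _ = (1 / (m.factorial : ℝ)) *
        ((m.factorial : ℝ) * (∑ j ∈ Ico a b, w m j) / ((b:ℝ) - a)) := by
        rw [hHasSum.tsum_eq]
    _ = (∑ j ∈ Ico a b, w m j) / ((b:ℝ) - a) := by
        field_simp
    _ = ((∑ k ∈ Finset.Icc 1 b, 1 / (k : ℝ) ^ (m + 1)) -
        ∑ k ∈ Finset.Icc 1 a, 1 / (k : ℝ) ^ (m + 1)) / ((b : ℝ) - a) := by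
        rw [hIco]
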